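/- The expected number of random elements needed to generate the elementary abelian group of order 8 is e((ℤ/2ℤ)³) = 94/21. -/
import Mathlib

open Function Set

/-- The probability that `k` uniformly random elements of `G` generate `G`. -/
noncomputable def genProb (G : Type*) [Group G] (k : ℕ) : ℝ :=
  (Nat.card {v : Fin k → G // Subgroup.closure (Set.range v) = ⊤} : ℝ) /
    (Nat.card G : ℝ) ^ k

/-- `egen G = ∑_{k ≥ 0} (1 - P_G(k))`, the expected number of random elements needed to
generate `G`. -/
noncomputable def egen (G : Type*) [Group G] : ℝ :=
  ∑' k : ℕ, (1 - genProb G k)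

lemma addClosure_eq_span (n : ℕ) [NeZero n] {M : Type*} [AddCommGroup M] [Module (ZMod n) M]
    (S : Set M) : AddSubgroup.closure S = (Submodule.span (ZMod n) S).toAddSubgroup := by
  apply le_antisymm
  · exact AddSubgroup.closure_le _ |>.2 Submodule.subset_span
  · have h2 : Submodule.span (ZMod n) S ≤ AddSubgroup.toZModSubmodule n (AddSubgroup.closure S) :=
      Submodule.span_le.2 AddSubgroup.subset_closure
    intro x hx
    exact (AddSubgroup.mem_toZModSubmodule n).1 (h2 hx)

lemma mulClosure_eq (V : Type*) [AddCommGroup V] (T : Set (Multiplicative V)) :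
    Subgroup.closure T = AddSubgroup.toSubgroup (AddSubgroup.closure (Multiplicative.toAdd '' T)) := by
  apply le_antisymm
  · refine (Subgroup.closure_le _).2 ?_
    intro x hx
    show x.toAdd ∈ AddSubgroup.closure (Multiplicative.toAdd '' T)
    exact AddSubgroup.subset_closure ⟨x, hx, rfl⟩
  · have h : AddSubgroup.closure (Multiplicative.toAdd '' T) ≤
        Subgroup.toAddSubgroup' (Subgroup.closure T) := by
      refine (AddSubgroup.closure_le _).2 ?_
      rintro y ⟨x, hx, rfl⟩
      show x ∈ Subgroup.closure T
      exact Subgroup.subset_closure hx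
    intro x hx
    have : x.toAdd ∈ Subgroup.toAddSubgroup' (Subgroup.closure T) := h hx
    exact this

lemma closure_top_iff {k : ℕ} (v : Fin k → (Fin 3 → Multiplicative (ZMod 2))) :
    Subgroup.closure (Set.range v) = ⊤ ↔
      Submodule.span (ZMod 2) (Set.range (fun i => fun j => (v i j).toAdd)) = ⊤ := by
  set e := (MulEquiv.piMultiplicative (fun _ : Fin 3 => ZMod 2)).symm
  have h1 : Subgroup.closure (Set.range v) = ⊤ ↔
      Subgroup.map e.toMonoidHom (Subgroup.closure (Set.range v)) = ⊤ := by
    constructor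
    · rintro h; rw [h]; exact Subgroup.map_top_of_surjective _ e.surjective
    · intro h
      refine Subgroup.map_injective (f := e.toMonoidHom) e.injective ?_
      rw [h, Subgroup.map_top_of_surjective _ e.surjective]
  rw [h1, MonoidHom.map_closure, ← Set.range_comp, mulClosure_eq, ← Set.range_comp,
    map_eq_top_iff, addClosure_eq_span 2,
    show (Multiplicative.toAdd ∘ ⇑e.toMonoidHom ∘ v) = (fun i => fun j => (v i j).toAdd) from rfl]
  constructor
  · intro h
    ext x
    have : x ∈ (Submodule.span (ZMod 2) (Set.range fun i j => (v i j).toAdd)).toAddSubgroup :=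
      h ▸ AddSubgroup.mem_top x
    simpa [Submodule.mem_toAddSubgroup] using this
  · intro h
    rw [h]
    rfl

lemma span_top_iff_li {k : ℕ} (w : Fin k → (Fin 3 → ZMod 2)) :
    Submodule.span (ZMod 2) (Set.range w) = ⊤ ↔
      LinearIndependent (ZMod 2) (fun j : Fin 3 => fun i : Fin k => w i j) := by
  haveI : Fact (Nat.Prime 2) := ⟨Nat.prime_two⟩
  set M : Matrix (Fin 3) (Fin k) (ZMod 2) := Matrix.of (fun j i => w i j) with hM
  have hcols : M.rank = Module.finrank (ZMod 2) (Submodule.span (ZMod 2) (Set.range w)) := by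
    rw [Matrix.rank_eq_finrank_span_cols]
    rfl
  have hrows : M.rank = Module.finrank (ZMod 2)
      (Submodule.span (ZMod 2) (Set.range (fun j : Fin 3 => fun i : Fin k => w i j))) := by
    rw [Matrix.rank_eq_finrank_span_row]
    rfl
  rw [linearIndependent_iff_card_eq_finrank_span]
  constructor
  · intro h
    rw [Fintype.card_fin, Set.finrank, ← hrows, hcols, h, finrank_top]
    simp [Module.finrank_fintype_fun_eq_card]
  · intro h
    apply Submodule.eq_top_of_finrank_eq
    rw [← hcols, hrows, ← Set.finrank, ← h]
    simp [Module.finrank_fintype_fun_eq_card]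

noncomputable def genEquiv (k : ℕ) :
    {v : Fin k → (Fin 3 → Multiplicative (ZMod 2)) // Subgroup.closure (Set.range v) = ⊤} ≃
    {u : Fin 3 → (Fin k → ZMod 2) // LinearIndependent (ZMod 2) u} where
  toFun := fun ⟨v, hv⟩ => ⟨fun j i => (v i j).toAdd,
    (span_top_iff_li (fun i j => (v i j).toAdd)).1 ((closure_top_iff v).1 hv)⟩
  invFun := fun ⟨u, hu⟩ => ⟨fun i j => Multiplicative.ofAdd (u j i),
    (closure_top_iff _).2 ((span_top_iff_li _).2 hu)⟩
  left_inv := fun _ => rfl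
  right_inv := fun _ => rfl

lemma card_gen (k : ℕ) :
    (Nat.card {v : Fin k → (Fin 3 → Multiplicative (ZMod 2)) //
        Subgroup.closure (Set.range v) = ⊤} : ℝ)
      = ((2:ℝ)^k - 1) * ((2:ℝ)^k - 2) * ((2:ℝ)^k - 4) := by
  haveI : Fact (Nat.Prime 2) := ⟨Nat.prime_two⟩
  rw [Nat.card_congr (genEquiv k)]
  have hfr : Module.finrank (ZMod 2) (Fin k → ZMod 2) = k := by
    simp [Module.finrank_fintype_fun_eq_card]
  by_cases hk : 3 ≤ k
  · rw [card_linearIndependent (K := ZMod 2) (by rw [hfr]; exact hk)]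
    rw [hfr]
    have h2 : Fintype.card (ZMod 2) = 2 := by simp
    rw [h2, Fin.prod_univ_three]
    have h1 : (1:ℕ) ≤ 2^k := Nat.one_le_two_pow
    have h2' : (2:ℕ) ≤ 2^k := by
      calc (2:ℕ) = 2^1 := by norm_num
      _ ≤ 2^k := Nat.pow_le_pow_right (by norm_num) (by omega)
    have h4 : (4:ℕ) ≤ 2^k := by
      calc (4:ℕ) = 2^2 := by norm_num
      _ ≤ 2^k := Nat.pow_le_pow_right (by norm_num) (by omega)
    simp only [Fin.val_zero, Fin.val_one, Fin.val_two, pow_zero, pow_one]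
    have h4' : (2:ℕ)^2 ≤ 2^k := Nat.pow_le_pow_right (by norm_num) (by omega)
    push_cast [Nat.cast_sub h1, Nat.cast_sub h2', Nat.cast_sub h4', Nat.cast_sub h4]
    norm_num
  · haveI : IsEmpty {u : Fin 3 → (Fin k → ZMod 2) // LinearIndependent (ZMod 2) u} := by
      refine ⟨fun ⟨u, hu⟩ => ?_⟩
      have := hu.fintype_card_le_finrank
      rw [hfr, Fintype.card_fin] at this
      omega
    rw [Nat.card_of_isEmpty]
    interval_cases k <;> norm_num

lemma one_sub_genProb (k : ℕ) :
    1 - genProb (Fin 3 → Multiplicative (ZMod 2)) k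
      = 7 * (1/2:ℝ)^k - 14 * (1/4:ℝ)^k + 8 * (1/8:ℝ)^k := by
  have hcard : (Nat.card (Fin 3 → Multiplicative (ZMod 2)) : ℝ) = 8 := by
    simp [Nat.card_eq_fintype_card]
  rw [genProb, card_gen, hcard]
  have h2 : ((2:ℝ)^k) ≠ 0 := by positivity
  have h4 : (4:ℝ)^k = ((2:ℝ)^k)^2 := by
    rw [← pow_mul, mul_comm, pow_mul]; norm_num
  have h8 : (8:ℝ)^k = ((2:ℝ)^k)^3 := by
    rw [← pow_mul, mul_comm, pow_mul]; norm_num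
  rw [div_pow, div_pow, div_pow, one_pow, h4, h8]
  field_simp
  ring

/-- `e((ℤ/2ℤ)³) = 94/21`. -/
theorem egen_elementary_abelian_eight :
    egen (Fin 3 → Multiplicative (ZMod 2)) = 94 / 21 := by
  rw [egen]
  have s2 : Summable (fun k : ℕ => (1/2:ℝ)^k) := summable_geometric_of_lt_one (by norm_num) (by norm_num)
  have s4 : Summable (fun k : ℕ => (1/4:ℝ)^k) := summable_geometric_of_lt_one (by norm_num) (by norm_num)
  have s8 : Summable (fun k : ℕ => (1/8:ℝ)^k) := summable_geometric_of_lt_one (by norm_num) (by norm_num)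
  calc ∑' k : ℕ, (1 - genProb (Fin 3 → Multiplicative (ZMod 2)) k)
      = ∑' k : ℕ, (7 * (1/2:ℝ)^k - 14 * (1/4:ℝ)^k + 8 * (1/8:ℝ)^k) := by
        exact tsum_congr fun k => one_sub_genProb k
    _ = (∑' k : ℕ, (7 * (1/2:ℝ)^k - 14 * (1/4:ℝ)^k)) + ∑' k : ℕ, 8 * (1/8:ℝ)^k := by
        exact Summable.tsum_add (((s2.mul_left 7).sub (s4.mul_left 14))) (s8.mul_left 8)
    _ = (∑' k : ℕ, 7 * (1/2:ℝ)^k) - (∑' k : ℕ, 14 * (1/4:ℝ)^k) + ∑' k : ℕ, 8 * (1/8:ℝ)^k := by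
        rw [Summable.tsum_sub (s2.mul_left 7) (s4.mul_left 14)]
    _ = 7 * (1 - 1/2:ℝ)⁻¹ - 14 * (1 - 1/4:ℝ)⁻¹ + 8 * (1 - 1/8:ℝ)⁻¹ := by
        rw [tsum_mul_left, tsum_mul_left, tsum_mul_left,
          tsum_geometric_of_lt_one (by norm_num) (by norm_num),
          tsum_geometric_of_lt_one (by norm_num) (by norm_num),
          tsum_geometric_of_lt_one (by norm_num) (by norm_num)]
    _ = 94 / 21 := by norm_num
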